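/- The TD Bellman operator Ĥ^π satisfies ‖Ĥ^π Q₁ - Ĥ^π Q₂‖_∞ ≤ (2γ - γ²) ‖Q₁ - Q₂‖_∞ for all bounded Q₁, Q₂. -/
import Mathlib


/-- The empirical TD Bellman operator. -/
def Hop {S A : Type*} [Fintype S] (P : S → A → S → ℝ) (r : S → A → ℝ) (γ : ℝ)
    (π : S → A) (Q : S → A → ℝ) : S → A → ℝ :=
  fun s a => r s a + γ * ∑ s', P s a s' *
    (Q s' (π s') - (r s a + γ * Q s' (π s') - Q s (π s)))

/-- The TD Bellman operator satisfies
`‖Ĥ^π Q₁ - Ĥ^π Q₂‖_∞ ≤ (2γ - γ²) ‖Q₁ - Q₂‖_∞`. -/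
theorem Hop_lipschitz {S A : Type*} [Fintype S] [Fintype A] [Nonempty S] [Nonempty A]
    (P : S → A → S → ℝ) (hP0 : ∀ s a s', 0 ≤ P s a s')
    (hP1 : ∀ s a, ∑ s', P s a s' = 1)
    (r : S → A → ℝ) (γ : ℝ) (hγ0 : 0 ≤ γ) (hγ1 : γ < 1) (π : S → A)
    (Q₁ Q₂ : S → A → ℝ) :
    dist (Hop P r γ π Q₁) (Hop P r γ π Q₂) ≤ (2 * γ - γ ^ 2) * dist Q₁ Q₂ := by
  set d := dist Q₁ Q₂ with hd
  have hd0 : 0 ≤ d := dist_nonneg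
  have hD : ∀ s a, |Q₁ s a - Q₂ s a| ≤ d := by
    intro s a
    rw [← Real.dist_eq]
    exact (dist_le_pi_dist (Q₁ s) (Q₂ s) a).trans (dist_le_pi_dist Q₁ Q₂ s)
  have hC : 0 ≤ (2 * γ - γ ^ 2) * d := by
    apply mul_nonneg _ hd0
    nlinarith
  rw [dist_pi_le_iff hC]
  intro s
  rw [dist_pi_le_iff hC]
  intro a
  rw [Real.dist_eq]
  have key : Hop P r γ π Q₁ s a - Hop P r γ π Q₂ s a
      = γ * ∑ s', P s a s' *
        ((1 - γ) * (Q₁ s' (π s') - Q₂ s' (π s')) + (Q₁ s (π s) - Q₂ s (π s))) := by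
    simp only [Hop]
    rw [Finset.mul_sum, Finset.mul_sum]
    rw [show ∀ x y z w : ℝ, (x + y) - (z + w) = (y - w) + (x - z) by intros; ring,
      sub_self, add_zero, ← Finset.sum_sub_distrib, Finset.mul_sum]
    exact Finset.sum_congr rfl fun s' _ => by ring
  rw [key, abs_mul, abs_of_nonneg hγ0]
  have hsum : |∑ s', P s a s' *
      ((1 - γ) * (Q₁ s' (π s') - Q₂ s' (π s')) + (Q₁ s (π s) - Q₂ s (π s)))|
      ≤ (2 - γ) * d := by
    calc |∑ s', P s a s' *
        ((1 - γ) * (Q₁ s' (π s') - Q₂ s' (π s')) + (Q₁ s (π s) - Q₂ s (π s)))|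
        ≤ ∑ s', |P s a s' *
          ((1 - γ) * (Q₁ s' (π s') - Q₂ s' (π s')) + (Q₁ s (π s) - Q₂ s (π s)))| :=
          Finset.abs_sum_le_sum_abs _ _
      _ ≤ ∑ s', P s a s' * ((2 - γ) * d) := by
          apply Finset.sum_le_sum
          intro s' _
          rw [abs_mul, abs_of_nonneg (hP0 s a s')]
          apply mul_le_mul_of_nonneg_left _ (hP0 s a s')
          calc |(1 - γ) * (Q₁ s' (π s') - Q₂ s' (π s')) + (Q₁ s (π s) - Q₂ s (π s))|
              ≤ |(1 - γ) * (Q₁ s' (π s') - Q₂ s' (π s'))| + |Q₁ s (π s) - Q₂ s (π s)| :=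
                abs_add_le _ _
            _ ≤ (1 - γ) * d + d := by
                apply add_le_add _ (hD s (π s))
                rw [abs_mul, abs_of_nonneg (by linarith : (0:ℝ) ≤ 1 - γ)]
                exact mul_le_mul_of_nonneg_left (hD s' (π s')) (by linarith)
            _ = (2 - γ) * d := by ring
      _ = (2 - γ) * d := by rw [← Finset.sum_mul, hP1, one_mul]
  calc γ * |∑ s', P s a s' *
      ((1 - γ) * (Q₁ s' (π s') - Q₂ s' (π s')) + (Q₁ s (π s) - Q₂ s (π s)))|
      ≤ γ * ((2 - γ) * d) := mul_le_mul_of_nonneg_left hsum hγ0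
    _ = (2 * γ - γ ^ 2) * d := by ring
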